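/- If f : J → ℝ is nondecreasing and right-continuous on a bounded interval J, then its increasing rearrangement satisfies Φ(f) = f almost everywhere on J. -/

import Mathlib

open MeasureTheory

/-- `Ψ(f)(y) = ∫_{[a,b]} 1{f(v) ≤ y} dv`. -/
noncomputable def Psi (a b : ℝ) (f : ℝ → ℝ) (y : ℝ) : ℝ :=
  ∫ u in Set.Icc a b, Set.indicator {v : ℝ | f v ≤ y} (fun _ => (1 : ℝ)) u

/-- The increasing rearrangement `Φ(f)(u) = (Ψ f)⁻¹(u) = sup {y : Ψ(f)(y) ≤ u - a}`. -/
noncomputable def Phi (a b : ℝ) (f : ℝ → ℝ) (u : ℝ) : ℝ :=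
  sSup {y : ℝ | Psi a b f y ≤ u - a}

lemma measurableSet_level (a b y : ℝ) (f : ℝ → ℝ) (hmono : MonotoneOn f (Set.Icc a b)) :
    MeasurableSet ({v : ℝ | f v ≤ y} ∩ Set.Icc a b) := by
  apply Set.OrdConnected.measurableSet
  constructor
  rintro x ⟨hx, hxI⟩ z ⟨hz, hzI⟩ w hw
  have hwI : w ∈ Set.Icc a b := ⟨hxI.1.trans hw.1, hw.2.trans hzI.2⟩
  exact ⟨le_trans (hmono hwI hzI hw.2) hz, hwI⟩

lemma Psi_eq (a b y : ℝ) (f : ℝ → ℝ) (hmono : MonotoneOn f (Set.Icc a b)) :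
    Psi a b f y = (volume ({v : ℝ | f v ≤ y} ∩ Set.Icc a b)).toReal := by
  have hS := measurableSet_level a b y f hmono
  unfold Psi
  have hcongr : ∀ u ∈ Set.Icc a b,
      Set.indicator {v : ℝ | f v ≤ y} (fun _ => (1 : ℝ)) u
        = Set.indicator ({v : ℝ | f v ≤ y} ∩ Set.Icc a b) (fun _ => (1 : ℝ)) u := by
    intro u hu
    by_cases h : f u ≤ y
    · simp [Set.indicator_apply, h, hu]
    · simp [Set.indicator_apply, h]
  rw [setIntegral_congr_fun measurableSet_Icc hcongr, setIntegral_indicator hS,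
    setIntegral_const]
  rw [smul_eq_mul, mul_one]
  have hset : Set.Icc a b ∩ ({v : ℝ | f v ≤ y} ∩ Set.Icc a b) = {v : ℝ | f v ≤ y} ∩ Set.Icc a b := by
    ext v
    simp only [Set.mem_inter_iff, Set.mem_setOf_eq]
    tauto
  rw [hset]; rfl

/-- If `f` is nondecreasing and right-continuous on `J = [a,b]`, then its increasing
rearrangement satisfies `Φ(f) = f` almost everywhere on `J`. -/
theorem rearrangement_of_monotone (a b : ℝ) (hab : a ≤ b) (f : ℝ → ℝ)
    (hmono : MonotoneOn f (Set.Icc a b))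
    (hrc : ∀ x ∈ Set.Icc a b, ContinuousWithinAt f (Set.Ici x) x) :
    ∀ᵐ u ∂(volume.restrict (Set.Icc a b)), Phi a b f u = f u := by
  have h1 : ∀ᵐ u ∂(volume.restrict (Set.Icc a b)), u ∈ Set.Icc a b :=
    ae_restrict_mem measurableSet_Icc
  have h2 : ∀ᵐ u ∂(volume.restrict (Set.Icc a b)), u ≠ b := by
    refine ae_iff.mpr (le_antisymm ?_ (zero_le))
    have hsub : {u : ℝ | ¬ u ≠ b} ⊆ {b} := by intro u hu; simp at hu; simp [hu]
    calc volume.restrict (Set.Icc a b) {u : ℝ | ¬ u ≠ b}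
        ≤ volume.restrict (Set.Icc a b) {b} := measure_mono hsub
      _ ≤ volume {b} := Measure.restrict_apply_le _ _
      _ = 0 := measure_singleton b
  filter_upwards [h1, h2] with u hu hub
  have hub' : u < b := lt_of_le_of_ne hu.2 hub
  -- Claim A: every y < f u belongs to the set defining Phi
  have hA : ∀ y, y < f u → Psi a b f y ≤ u - a := by
    intro y hy
    rw [Psi_eq a b y f hmono]
    have hsub : {v : ℝ | f v ≤ y} ∩ Set.Icc a b ⊆ Set.Ico a u := by
      rintro v ⟨hv, hvI⟩
      refine ⟨hvI.1, ?_⟩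
      by_contra h
      push_neg at h
      exact absurd (le_trans (hmono hu hvI h) hv) (not_le.mpr hy)
    calc (volume ({v : ℝ | f v ≤ y} ∩ Set.Icc a b)).toReal
        ≤ (volume (Set.Ico a u)).toReal := by
          apply ENNReal.toReal_mono
          · simp [Real.volume_Ico]
          · exact measure_mono hsub
      _ = u - a := by rw [Real.volume_Ico, ENNReal.toReal_ofReal (sub_nonneg.mpr hu.1)]
  -- Claim B: no y > f u belongs to the set defining Phi
  have hB : ∀ y, f u < y → ¬ (Psi a b f y ≤ u - a) := by
    intro y hy
    have hev : ∀ᶠ w in nhdsWithin u (Set.Ioi u), (f w < y ∧ w ≤ b) ∧ w ∈ Set.Ioi u := by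
      have h1' : ∀ᶠ w in nhdsWithin u (Set.Ici u), f w < y :=
        (hrc u hu) (Iio_mem_nhds hy)
      have h2' : ∀ᶠ w in nhdsWithin u (Set.Ioi u), f w < y :=
        (nhdsWithin_mono u Set.Ioi_subset_Ici_self) h1'
      have h3' : ∀ᶠ w in nhdsWithin u (Set.Ioi u), w ≤ b :=
        ((eventually_lt_nhds hub').filter_mono nhdsWithin_le_nhds).mono fun w hw => le_of_lt hw
      exact (h2'.and h3').and eventually_mem_nhdsWithin
    obtain ⟨w, ⟨hfw, hwb⟩, hwu⟩ := hev.exists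
    have hwu' : u < w := hwu
    have hwI : w ∈ Set.Icc a b := ⟨hu.1.trans (le_of_lt hwu), hwb⟩
    have hsub : Set.Icc a w ⊆ {v : ℝ | f v ≤ y} ∩ Set.Icc a b := by
      rintro v ⟨hva, hvw⟩
      have hvI : v ∈ Set.Icc a b := ⟨hva, hvw.trans hwb⟩
      exact ⟨le_of_lt (lt_of_le_of_lt (hmono hvI hwI hvw) hfw), hvI⟩
    rw [Psi_eq a b y f hmono]
    have hfin : volume ({v : ℝ | f v ≤ y} ∩ Set.Icc a b) ≠ ⊤ := by
      refine ne_top_of_le_ne_top ?_ (measure_mono Set.inter_subset_right)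
      simp [Real.volume_Icc]
    have hle : (w - a : ℝ) ≤ (volume ({v : ℝ | f v ≤ y} ∩ Set.Icc a b)).toReal := by
      calc (w - a : ℝ) = (volume (Set.Icc a w)).toReal := by
            rw [Real.volume_Icc, ENNReal.toReal_ofReal (sub_nonneg.mpr hwI.1)]
        _ ≤ _ := ENNReal.toReal_mono hfin (measure_mono hsub)
    push_neg
    linarith
  -- Conclude
  have hne : (f u - 1) ∈ {y : ℝ | Psi a b f y ≤ u - a} := hA _ (by linarith)
  have hbdd : ∀ z ∈ {y : ℝ | Psi a b f y ≤ u - a}, z ≤ f u := by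
    intro z hz
    by_contra h
    push_neg at h
    exact hB z h hz
  have hBdd : BddAbove {y : ℝ | Psi a b f y ≤ u - a} := ⟨f u, hbdd⟩
  refine le_antisymm (csSup_le ⟨_, hne⟩ hbdd) ?_
  refine le_of_forall_lt fun z hz => ?_
  obtain ⟨z', hz1, hz2⟩ := exists_between hz
  exact lt_of_lt_of_le hz1 (le_csSup hBdd (hA z' hz2))
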